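/- arXiv:1712.02043 — 3 statements merged into one kernel-verified Lean document; each statement's English description precedes it below -/
import Mathlib

section
/- Let $X \sim \mathrm{BIN}(n,p)$ with $0 \le p < 1$. Then $E[1/(n - X + 1)] \le 1/((n+1)(1-p))$. -/
/-- For `X ~ BIN(n,p)` with `0 ≤ p < 1`, `E[1/(n - X + 1)] ≤ 1/((n+1)(1-p))`.
The expectation is written as the explicit sum over the binomial distribution. -/
theorem binomial_inv_expectation_le (n : ℕ) (p : ℝ) (hp0 : 0 ≤ p) (hp1 : p < 1) :
    ∑ k ∈ Finset.range (n + 1),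
        (n.choose k : ℝ) * p ^ k * (1 - p) ^ (n - k) * ((n : ℝ) - (k : ℝ) + 1)⁻¹ ≤
      (((n : ℝ) + 1) * (1 - p))⁻¹ := by
  have hq : (0:ℝ) < 1 - p := by linarith
  have hc : (0:ℝ) < ((n:ℝ) + 1) * (1 - p) := by positivity
  have h1 : ∀ k ∈ Finset.range (n + 1),
      (n.choose k : ℝ) * p ^ k * (1 - p) ^ (n - k) * ((n : ℝ) - (k : ℝ) + 1)⁻¹
        = ((n+1).choose k : ℝ) * p ^ k * (1 - p) ^ (n + 1 - k) * (((n:ℝ) + 1) * (1 - p))⁻¹ := by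
    intro k hk
    have hk' : k ≤ n := Nat.lt_succ_iff.mp (Finset.mem_range.mp hk)
    have hcast : ((n:ℝ) - (k:ℝ) + 1) = ((n + 1 - k : ℕ) : ℝ) := by
      have : n + 1 - k = n - k + 1 := Nat.succ_sub hk'
      rw [this]
      push_cast [Nat.cast_sub hk']
      ring
    have hkey : (n.choose k : ℝ) * ((n:ℝ) + 1) = ((n+1).choose k : ℝ) * ((n:ℝ) - (k:ℝ) + 1) := by
      rw [hcast]
      exact_mod_cast congrArg (Nat.cast : ℕ → ℝ) (Nat.choose_mul_succ_eq n k)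
    have hpow : (1 - p) ^ (n + 1 - k) = (1 - p) ^ (n - k) * (1 - p) := by
      rw [Nat.succ_sub hk', pow_succ]
    have hd : ((n:ℝ) - (k:ℝ) + 1) ≠ 0 := by
      rw [hcast]; exact Nat.cast_ne_zero.mpr (by omega)
    rw [hpow]
    field_simp
    linear_combination (p ^ k) * hkey
  rw [Finset.sum_congr rfl h1, ← Finset.sum_mul]
  have h2 : ∑ k ∈ Finset.range (n + 1), ((n+1).choose k : ℝ) * p ^ k * (1 - p) ^ (n + 1 - k) ≤ 1 := by
    have h3 : ∑ k ∈ Finset.range (n + 2), ((n+1).choose k : ℝ) * p ^ k * (1 - p) ^ (n + 1 - k) = 1 := by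
      calc ∑ k ∈ Finset.range (n + 2), ((n+1).choose k : ℝ) * p ^ k * (1 - p) ^ (n + 1 - k)
          = ∑ k ∈ Finset.range (n + 2), p ^ k * (1 - p) ^ (n + 1 - k) * ((n+1).choose k : ℝ) :=
            Finset.sum_congr rfl fun k _ => by ring
        _ = (p + (1 - p)) ^ (n + 1) := (add_pow p (1 - p) (n + 1)).symm
        _ = 1 := by ring
    calc ∑ k ∈ Finset.range (n + 1), ((n+1).choose k : ℝ) * p ^ k * (1 - p) ^ (n + 1 - k)
        ≤ ∑ k ∈ Finset.range (n + 2), ((n+1).choose k : ℝ) * p ^ k * (1 - p) ^ (n + 1 - k) := by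
          apply Finset.sum_le_sum_of_subset_of_nonneg
          · exact Finset.range_subset_range.mpr (by omega)
          · intro k _ _; positivity
      _ = 1 := h3
  calc (∑ k ∈ Finset.range (n + 1), ((n+1).choose k : ℝ) * p ^ k * (1 - p) ^ (n + 1 - k)) * (((n:ℝ) + 1) * (1 - p))⁻¹
      ≤ 1 * (((n:ℝ) + 1) * (1 - p))⁻¹ := by
        apply mul_le_mul_of_nonneg_right h2 (by positivity)
    _ = (((n:ℝ) + 1) * (1 - p))⁻¹ := one_mul _
end

section
/- Let $p_1, \dots, p_{m_0}$ be i.i.d. Uniform$(0,1)$ and $V(t) = \#\{i : p_i \le t\}$. For any fixed $0 \le s \le t \le 1$, $E\big[(1-t)/(m_0 - V(t) + 1) \,\big|\, V(s)\big] \le (1-s)/(m_0 - V(s) + 1)$ almost surely. -/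
set_option linter.unusedSectionVars false
set_option linter.unusedVariables false
set_option linter.deprecated false


open MeasureTheory ProbabilityTheory

/-- The empirical counting process: the number of the random points `p i` that are `≤ t`. -/
noncomputable def countLE {Ω : Type*} {k : ℕ} (p : Fin k → Ω → ℝ) (t : ℝ) (ω : Ω) : ℕ :=
  (Finset.univ.filter fun i => p i ω ≤ t).card


section comb
open Finset

lemma comb_key (q r : ℝ) (hq : 0 ≤ q) (hr : 0 ≤ r) (N : ℕ) :
    ∑ m ∈ range (N+1), (N.choose m : ℝ) * (q^m * (r^(N-m+1) / ((N:ℝ)-(m:ℝ)+1)))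
      ≤ (q+r)^(N+1) / ((N:ℝ)+1) := by
  have key : ∀ m ∈ range (N+1), (N.choose m : ℝ) * (q^m * (r^(N-m+1) / ((N:ℝ)-(m:ℝ)+1)))
      = (q^m * r^(N+1-m) * ((N+1).choose m : ℝ)) / ((N:ℝ)+1) := by
    intro m hm
    rw [mem_range, Nat.lt_succ_iff] at hm
    have h1 : (N:ℝ) - (m:ℝ) + 1 = ((N+1-m : ℕ) : ℝ) := by
      have h : m ≤ N + 1 := by omega
      push_cast [h]; ring
    have h2 : N - m + 1 = N + 1 - m := by omega
    have h3 : (N.choose m : ℝ) * ((N:ℝ)+1) = ((N+1).choose m : ℝ) * ((N+1-m : ℕ):ℝ) := by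
      have := Nat.choose_mul_succ_eq N m
      exact_mod_cast congrArg (Nat.cast (R := ℝ)) this
    have hNm : (0:ℝ) < ((N+1-m : ℕ):ℝ) := by
      have : 0 < N + 1 - m := by omega
      exact_mod_cast this
    have h5 : (N.choose m:ℝ) / ((N+1-m:ℕ):ℝ) = ((N+1).choose m : ℝ) / ((N:ℝ)+1) :=
      (div_eq_div_iff hNm.ne' (by positivity)).mpr h3
    rw [h1, h2]
    calc (N.choose m:ℝ) * (q^m * (r^(N+1-m) / ((N+1-m:ℕ):ℝ)))
        = q^m * r^(N+1-m) * ((N.choose m:ℝ)/((N+1-m:ℕ):ℝ)) := by ring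
      _ = q^m * r^(N+1-m) * (((N+1).choose m:ℝ)/((N:ℝ)+1)) := by rw [h5]
      _ = (q^m * r^(N+1-m) * ((N+1).choose m : ℝ)) / ((N:ℝ)+1) := by ring
  rw [Finset.sum_congr rfl key, ← Finset.sum_div]
  have hsub : ∑ m ∈ range (N+1), q^m * r^(N+1-m) * (((N+1).choose m : ℕ):ℝ)
      ≤ ∑ m ∈ range (N+2), q^m * r^(N+1-m) * (((N+1).choose m : ℕ):ℝ) := by
    apply Finset.sum_le_sum_of_subset_of_nonneg (by intro x; simp; omega)
    intro i _ _; positivity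
  have hbin : ∑ m ∈ range (N+2), q^m * r^(N+1-m) * (((N+1).choose m : ℕ):ℝ) = (q+r)^(N+1) :=
    (add_pow q r (N+1)).symm
  rw [← hbin]
  exact (div_le_div_iff_of_pos_right (by positivity)).mpr hsub

lemma comb_powerset {ι : Type*} (q r : ℝ) (hq : 0 ≤ q) (hr : 0 ≤ r) (S : Finset ι) :
    ∑ B ∈ S.powerset, q^B.card * (r^(S.card - B.card + 1) / ((S.card:ℝ) - (B.card:ℝ) + 1))
      ≤ (q+r)^(S.card+1) / ((S.card:ℝ)+1) := by
  rw [Finset.sum_powerset_apply_card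
    (fun m => q^m * (r^(S.card - m + 1) / ((S.card:ℝ) - (m:ℝ) + 1)))]
  simp only [smul_eq_mul, nsmul_eq_mul]
  exact comb_key q r hq hr S.card

lemma sum_powerset_weights {ι : Type*} (q r : ℝ) (S : Finset ι) :
    ∑ B ∈ S.powerset, q^B.card * r^(S.card - B.card) = (q+r)^S.card := by
  rw [Finset.sum_powerset_apply_card (fun m => q^m * r^(S.card - m))]
  simp only [nsmul_eq_mul]
  rw [add_pow q r S.card]
  exact Finset.sum_congr rfl fun m _ => by ring

end comb

lemma measurable_countLE {Ω : Type*} [MeasurableSpace Ω] {k : ℕ} {p : Fin k → Ω → ℝ}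
    (hmeas : ∀ i, Measurable (p i)) (u : ℝ) : Measurable (countLE p u) := by
  have : countLE p u = fun ω => ∑ i, if p i ω ≤ u then 1 else 0 := by
    funext ω; exact Finset.card_filter _ _
  rw [this]
  exact Finset.measurable_sum _ fun i _ =>
    Measurable.ite (measurableSet_le (hmeas i) measurable_const) measurable_const measurable_const

section ctx
variable {Ω : Type*} [mΩ : MeasurableSpace Ω] {μ : Measure Ω} [IsProbabilityMeasure μ]
  {m0 : ℕ} {p : Fin m0 → Ω → ℝ} {s t : ℝ}

lemma unif_Iic (hmeas : ∀ i, Measurable (p i))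
    (hunif : ∀ i, Measure.map (p i) μ = volume.restrict (Set.Icc 0 1))
    (hs : 0 ≤ s) (hs1 : s ≤ 1) (i : Fin m0) :
    μ (p i ⁻¹' Set.Iic s) = ENNReal.ofReal s := by
  rw [← Measure.map_apply (hmeas i) measurableSet_Iic, hunif i,
    Measure.restrict_apply measurableSet_Iic]
  have : Set.Iic s ∩ Set.Icc 0 1 = Set.Icc 0 s := by
    ext x; simp only [Set.mem_inter_iff, Set.mem_Iic, Set.mem_Icc]
    constructor
    · rintro ⟨h1, h2, _⟩; exact ⟨h2, h1⟩
    · rintro ⟨h1, h2⟩; exact ⟨h2, h1, h2.trans hs1⟩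
  rw [this, Real.volume_Icc, sub_zero]

lemma unif_Ioc (hmeas : ∀ i, Measurable (p i))
    (hunif : ∀ i, Measure.map (p i) μ = volume.restrict (Set.Icc 0 1))
    (hs : 0 ≤ s) (ht1 : t ≤ 1) (i : Fin m0) :
    μ (p i ⁻¹' Set.Ioc s t) = ENNReal.ofReal (t - s) := by
  rw [← Measure.map_apply (hmeas i) measurableSet_Ioc, hunif i,
    Measure.restrict_apply measurableSet_Ioc]
  have : Set.Ioc s t ∩ Set.Icc 0 1 = Set.Ioc s t := by
    apply Set.inter_eq_left.mpr
    intro x hx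
    exact ⟨hs.trans hx.1.le, hx.2.trans ht1⟩
  rw [this, Real.volume_Ioc]

lemma unif_Ioi (hmeas : ∀ i, Measurable (p i))
    (hunif : ∀ i, Measure.map (p i) μ = volume.restrict (Set.Icc 0 1))
    (ht0 : 0 ≤ t) (i : Fin m0) :
    μ (p i ⁻¹' Set.Ioi t) = ENNReal.ofReal (1 - t) := by
  rw [← Measure.map_apply (hmeas i) measurableSet_Ioi, hunif i,
    Measure.restrict_apply measurableSet_Ioi]
  have : Set.Ioi t ∩ Set.Icc 0 1 = Set.Ioc t 1 := by
    ext x; simp only [Set.mem_inter_iff, Set.mem_Ioi, Set.mem_Icc, Set.mem_Ioc]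
    constructor
    · rintro ⟨h1, _, h3⟩; exact ⟨h1, h3⟩
    · rintro ⟨h1, h2⟩; exact ⟨h1, ht0.trans h1.le, h2⟩
  rw [this, Real.volume_Ioc]

end ctx

section events
variable {Ω : Type*} [mΩ : MeasurableSpace Ω] {m0 : ℕ}

/-- interval assigned to index `i` by the pair of sets `(A, B)`. -/
def Tset (s t : ℝ) (A B : Finset (Fin m0)) (i : Fin m0) : Set ℝ :=
  if i ∈ A then Set.Iic s else if i ∈ B then Set.Ioc s t else Set.Ioi t

/-- the event that each `p i` lies in its assigned interval. -/
def Ev (p : Fin m0 → Ω → ℝ) (s t : ℝ) (A B : Finset (Fin m0)) : Set Ω :=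
  ⋂ i, p i ⁻¹' Tset s t A B i

/-- the weight of index `i`. -/
def wfun (s t : ℝ) (A B : Finset (Fin m0)) (i : Fin m0) : ℝ :=
  if i ∈ A then s else if i ∈ B then t - s else 1 - t

/-- the probability weight of the event `Ev p s t A B`. -/
def Wt (s t : ℝ) (A B : Finset (Fin m0)) : ℝ := ∏ i, wfun s t A B i

lemma measurableSet_Tset (s t : ℝ) (A B : Finset (Fin m0)) (i : Fin m0) :
    MeasurableSet (Tset s t A B i) := by
  unfold Tset
  split_ifs <;> measurability

lemma measurableSet_Ev {p : Fin m0 → Ω → ℝ} (hmeas : ∀ i, Measurable (p i))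
    (s t : ℝ) (A B : Finset (Fin m0)) : MeasurableSet (Ev p s t A B) :=
  MeasurableSet.iInter fun i => (hmeas i) (measurableSet_Tset s t A B i)

lemma wfun_nonneg {s t : ℝ} (hs : 0 ≤ s) (hst : s ≤ t) (ht : t ≤ 1)
    (A B : Finset (Fin m0)) (i : Fin m0) : 0 ≤ wfun s t A B i := by
  unfold wfun; split_ifs <;> linarith

lemma Wt_nonneg {s t : ℝ} (hs : 0 ≤ s) (hst : s ≤ t) (ht : t ≤ 1)
    (A B : Finset (Fin m0)) : 0 ≤ Wt s t A B :=
  Finset.prod_nonneg fun i _ => wfun_nonneg hs hst ht A B i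

lemma meas_Ev {μ : Measure Ω} [IsProbabilityMeasure μ] {p : Fin m0 → Ω → ℝ}
    (hmeas : ∀ i, Measurable (p i))
    (hindep : iIndepFun p μ)
    (hunif : ∀ i, Measure.map (p i) μ = volume.restrict (Set.Icc 0 1))
    {s t : ℝ} (hs : 0 ≤ s) (hst : s ≤ t) (ht : t ≤ 1)
    (A B : Finset (Fin m0)) :
    μ (Ev p s t A B) = ENNReal.ofReal (Wt s t A B) := by
  have h1 : Ev p s t A B = ⋂ i ∈ Finset.univ, p i ⁻¹' Tset s t A B i := by
    simp [Ev]
  rw [h1, hindep.measure_inter_preimage_eq_mul Finset.univ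
    (fun i _ => measurableSet_Tset s t A B i)]
  rw [Wt, ENNReal.ofReal_prod_of_nonneg (fun i _ => wfun_nonneg hs hst ht A B i)]
  apply Finset.prod_congr rfl
  intro i _
  unfold Tset wfun
  split_ifs
  · exact unif_Iic hmeas hunif hs (hst.trans ht) i
  · exact unif_Ioc hmeas hunif hs ht i
  · exact unif_Ioi hmeas hunif (hs.trans hst) i

end events

section membership
variable {Ω : Type*} {m0 : ℕ} {p : Fin m0 → Ω → ℝ} {s t : ℝ}

/-- canonical `A`-set of a point. -/
noncomputable def Aset (p : Fin m0 → Ω → ℝ) (s : ℝ) (ω : Ω) : Finset (Fin m0) :=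
  Finset.univ.filter fun i => p i ω ≤ s

/-- canonical `B`-set of a point. -/
noncomputable def Bset (p : Fin m0 → Ω → ℝ) (s t : ℝ) (ω : Ω) : Finset (Fin m0) :=
  Finset.univ.filter fun i => s < p i ω ∧ p i ω ≤ t

lemma mem_Ev {A B : Finset (Fin m0)} {ω : Ω} :
    ω ∈ Ev p s t A B ↔ ∀ i, p i ω ∈ Tset s t A B i := by
  simp [Ev, Set.mem_iInter]

lemma Bset_subset_compl (hω : True) : Bset p s t ω ⊆ (Aset p s ω)ᶜ := by
  intro i hi
  simp only [Bset, Finset.mem_filter] at hi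
  simp only [Finset.mem_compl, Aset, Finset.mem_filter, Finset.mem_univ, true_and]
  exact not_le.mpr hi.2.1

lemma mem_Ev_self {ω : Ω} : ω ∈ Ev p s t (Aset p s ω) (Bset p s t ω) := by
  rw [mem_Ev]
  intro i
  unfold Tset
  by_cases hA : i ∈ Aset p s ω
  · rw [if_pos hA]
    simpa [Aset] using hA
  · rw [if_neg hA]
    have hns : ¬ p i ω ≤ s := by simpa [Aset] using hA
    by_cases hB : i ∈ Bset p s t ω
    · rw [if_pos hB]
      simpa [Bset, Set.mem_Ioc, not_le.mp hns] using (by simpa [Bset] using hB : s < p i ω ∧ p i ω ≤ t).2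
    · rw [if_neg hB]
      have hnB : ¬ (s < p i ω ∧ p i ω ≤ t) := by simpa [Bset] using hB
      have : ¬ p i ω ≤ t := fun h => hnB ⟨not_le.mp hns, h⟩
      exact not_le.mp this

lemma eq_of_mem_Ev (hst : s ≤ t) {A B : Finset (Fin m0)} {ω : Ω}
    (hB : B ⊆ Aᶜ) (hω : ω ∈ Ev p s t A B) :
    A = Aset p s ω ∧ B = Bset p s t ω := by
  rw [mem_Ev] at hω
  have hiff : ∀ i, (i ∈ A ↔ p i ω ≤ s) ∧ (i ∈ B ↔ (s < p i ω ∧ p i ω ≤ t)) := by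
    intro i
    have h := hω i
    unfold Tset at h
    by_cases hA : i ∈ A
    · have hiB : i ∉ B := fun hiB => by simpa [hA] using hB hiB
      rw [if_pos hA] at h
      simp only [Set.mem_Iic] at h
      exact ⟨⟨fun _ => h, fun _ => hA⟩,
        ⟨fun hc => absurd hc hiB, fun hc => absurd h (not_le.mpr hc.1)⟩⟩
    · rw [if_neg hA] at h
      by_cases hBi : i ∈ B
      · rw [if_pos hBi] at h
        simp only [Set.mem_Ioc] at h
        exact ⟨⟨fun hc => absurd hc hA, fun hc => absurd hc (not_le.mpr h.1)⟩,
          ⟨fun _ => h, fun _ => hBi⟩⟩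
      · rw [if_neg hBi] at h
        simp only [Set.mem_Ioi] at h
        constructor
        · exact ⟨fun hc => absurd hc hA, fun hc => absurd hc (not_le.mpr (lt_of_le_of_lt hst h))⟩
        · exact ⟨fun hc => absurd hc hBi, fun hc => absurd hc.2 (not_le.mpr h)⟩
  constructor
  · ext i; simp only [Aset, Finset.mem_filter, Finset.mem_univ, true_and]; exact (hiff i).1
  · ext i; simp only [Bset, Finset.mem_filter, Finset.mem_univ, true_and]; exact (hiff i).2

lemma countLE_s_of_mem (hst : s ≤ t) {A B : Finset (Fin m0)} {ω : Ω}
    (hB : B ⊆ Aᶜ) (hω : ω ∈ Ev p s t A B) : countLE p s ω = A.card := by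
  obtain ⟨hA, -⟩ := eq_of_mem_Ev hst hB hω
  rw [hA]; rfl

lemma countLE_t_of_mem (hst : s ≤ t) {A B : Finset (Fin m0)} {ω : Ω}
    (hB : B ⊆ Aᶜ) (hω : ω ∈ Ev p s t A B) : countLE p t ω = A.card + B.card := by
  obtain ⟨hA, hBe⟩ := eq_of_mem_Ev hst hB hω
  subst hA; subst hBe
  have hunion : (Finset.univ.filter fun i => p i ω ≤ t) = Aset p s ω ∪ Bset p s t ω := by
    ext i
    simp only [Finset.mem_filter, Finset.mem_univ, true_and, Finset.mem_union, Aset, Bset]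
    constructor
    · intro h
      by_cases hle : p i ω ≤ s
      · exact Or.inl hle
      · exact Or.inr ⟨not_le.mp hle, h⟩
    · rintro (h | h)
      · exact h.trans hst
      · exact h.2
  have hdisj : Disjoint (Aset p s ω) (Bset p s t ω) :=
    Finset.disjoint_left.mpr fun i hiA hiB => by
      simp only [Aset, Finset.mem_filter] at hiA
      simp only [Bset, Finset.mem_filter] at hiB
      exact absurd hiA.2 (not_le.mpr hiB.2.1)
  rw [countLE, hunion, Finset.card_union_of_disjoint hdisj]

end membership

section decomp
variable {Ω : Type*} [mΩ : MeasurableSpace Ω] {m0 : ℕ} {p : Fin m0 → Ω → ℝ} {s t : ℝ}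

lemma preimage_decomp (hst : s ≤ t) (S : Set ℕ) [DecidablePred (· ∈ S)] :
    (countLE p s) ⁻¹' S =
      ⋃ A ∈ Finset.univ.powerset.filter (fun A : Finset (Fin m0) => A.card ∈ S),
        ⋃ B ∈ Aᶜ.powerset, Ev p s t A B := by
  ext ω
  simp only [Set.mem_preimage, Set.mem_iUnion, Finset.mem_filter, Finset.mem_powerset]
  constructor
  · intro h
    refine ⟨Aset p s ω, ⟨⟨Finset.subset_univ _, h⟩, Bset p s t ω, Bset_subset_compl trivial,
      mem_Ev_self⟩⟩
  · rintro ⟨A, ⟨⟨-, hcard⟩, B, hB, hω⟩⟩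
    rwa [countLE_s_of_mem hst (Finset.mem_powerset.mp (Finset.mem_powerset.mpr hB)) hω]

lemma Ev_disjoint_inner (hst : s ≤ t) {A B B' : Finset (Fin m0)}
    (hB : B ⊆ Aᶜ) (hB' : B' ⊆ Aᶜ) (hne : B ≠ B') :
    Disjoint (Ev p s t A B) (Ev p s t A B') := by
  rw [Set.disjoint_left]
  intro ω h1 h2
  exact hne ((eq_of_mem_Ev hst hB h1).2.trans (eq_of_mem_Ev hst hB' h2).2.symm)

lemma Ev_disjoint_outer (hst : s ≤ t) {A A' : Finset (Fin m0)} (hne : A ≠ A') :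
    Disjoint (⋃ B ∈ Aᶜ.powerset, Ev p s t A B) (⋃ B ∈ A'ᶜ.powerset, Ev p s t A' B) := by
  rw [Set.disjoint_left]
  intro ω h1 h2
  simp only [Set.mem_iUnion, Finset.mem_powerset] at h1 h2
  obtain ⟨B, hB, hω⟩ := h1
  obtain ⟨B', hB', hω'⟩ := h2
  exact hne ((eq_of_mem_Ev hst hB hω).1.trans (eq_of_mem_Ev hst hB' hω').1.symm)

lemma setIntegral_decomp {μ : Measure Ω} [IsProbabilityMeasure μ]
    (hmeas : ∀ i, Measurable (p i)) (hst : s ≤ t)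
    (S : Set ℕ) [DecidablePred (· ∈ S)] {f : Ω → ℝ} (hf : Integrable f μ)
    (F : ℕ → ℕ → ℝ)
    (hF : ∀ (A B : Finset (Fin m0)), B ⊆ Aᶜ → ∀ ω ∈ Ev p s t A B, f ω = F A.card B.card) :
    ∫ ω in (countLE p s) ⁻¹' S, f ω ∂μ =
      ∑ A ∈ Finset.univ.powerset.filter (fun A : Finset (Fin m0) => A.card ∈ S),
        ∑ B ∈ Aᶜ.powerset, F A.card B.card * (μ (Ev p s t A B)).toReal := by
  rw [preimage_decomp hst S]
  rw [integral_biUnion_finset _ (fun A _ => Finset.measurableSet_biUnion _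
      (fun B _ => measurableSet_Ev hmeas s t A B))
    (fun A _ A' _ hne => Ev_disjoint_outer hst hne)
    (fun A _ => hf.integrableOn)]
  apply Finset.sum_congr rfl
  intro A _
  rw [integral_biUnion_finset _ (fun B _ => measurableSet_Ev hmeas s t A B)
    (fun B hB B' hB' hne => Ev_disjoint_inner hst
      (Finset.mem_powerset.mp hB) (Finset.mem_powerset.mp hB') hne)
    (fun B _ => hf.integrableOn)]
  apply Finset.sum_congr rfl
  intro B hB
  rw [setIntegral_congr_fun (measurableSet_Ev hmeas s t A B)
    (fun ω hω => hF A B (Finset.mem_powerset.mp hB) ω hω), setIntegral_const,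
    smul_eq_mul, mul_comm, Measure.real]

end decomp

section mainineq
variable {Ω : Type*} [mΩ : MeasurableSpace Ω] {m0 : ℕ} {p : Fin m0 → Ω → ℝ} {s t : ℝ}

lemma Wt_formula {A B : Finset (Fin m0)} (hB : B ⊆ Aᶜ) :
    Wt s t A B = s^A.card * ((t-s)^B.card * (1-t)^(Aᶜ.card - B.card)) := by
  rw [Wt, ← Finset.prod_mul_prod_compl A]
  have e1 : ∀ i ∈ A, wfun s t A B i = s := fun i hi => by simp [wfun, hi]
  have h1 : ∏ i ∈ A, wfun s t A B i = s ^ A.card := by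
    rw [Finset.prod_congr rfl e1, Finset.prod_const]
  have e2 : ∀ i ∈ B, wfun s t A B i = t - s := fun i hi => by
    have hiA : i ∉ A := Finset.mem_compl.mp (hB hi)
    simp [wfun, hiA, hi]
  have e3 : ∀ i ∈ Aᶜ \ B, wfun s t A B i = 1 - t := fun i hi => by
    rw [Finset.mem_sdiff] at hi
    have hiA : i ∉ A := Finset.mem_compl.mp hi.1
    simp [wfun, hiA, hi.2]
  have h2 : ∏ i ∈ Aᶜ, wfun s t A B i = (t-s)^B.card * (1-t)^(Aᶜ.card - B.card) := by
    rw [← Finset.prod_sdiff hB, mul_comm]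
    congr 1
    · rw [Finset.prod_congr rfl e2, Finset.prod_const]
    · rw [Finset.prod_congr rfl e3, Finset.prod_const, Finset.card_sdiff_of_subset hB]
  rw [h1, h2]

lemma inner_ineq (hs : 0 ≤ s) (hst : s ≤ t) (ht : t ≤ 1) (k : ℕ) (C : Finset (Fin m0)) :
    ∑ B ∈ C.powerset,
        (1-t)/((C.card:ℝ) - B.card + 1) * (s^k * ((t-s)^B.card * (1-t)^(C.card - B.card)))
      ≤ ∑ B ∈ C.powerset,
        (1-s)/((C.card:ℝ) + 1) * (s^k * ((t-s)^B.card * (1-t)^(C.card - B.card))) := by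
  set q := t - s with hq
  set r := 1 - t with hr
  have hq0 : 0 ≤ q := by simp [hq]; linarith
  have hr0 : 0 ≤ r := by simp [hr]; linarith
  have hsk : (0:ℝ) ≤ s^k := by positivity
  have hL : ∀ B ∈ C.powerset,
      (1-t)/((C.card:ℝ) - B.card + 1) * (s^k * (q^B.card * r^(C.card - B.card)))
        = s^k * (q^B.card * (r^(C.card - B.card + 1) / ((C.card:ℝ) - (B.card:ℝ) + 1))) := by
    intro B hB
    rw [pow_succ]
    rw [← hr]
    ring
  rw [Finset.sum_congr rfl hL, ← Finset.mul_sum]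
  have h1 := comb_powerset q r hq0 hr0 C
  have h2 : ∑ B ∈ C.powerset, (1-s)/((C.card:ℝ) + 1) * (s^k * (q^B.card * r^(C.card - B.card)))
      = (1-s)/((C.card:ℝ) + 1) * s^k * (q+r)^C.card := by
    rw [← Finset.mul_sum, ← Finset.mul_sum, sum_powerset_weights q r C]
    ring
  rw [h2]
  have hqr : q + r = 1 - s := by rw [hq, hr]; ring
  calc s^k * ∑ B ∈ C.powerset, q^B.card * (r^(C.card - B.card + 1) / ((C.card:ℝ) - (B.card:ℝ) + 1))
      ≤ s^k * ((q+r)^(C.card+1) / ((C.card:ℝ)+1)) := by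
        exact mul_le_mul_of_nonneg_left h1 hsk
    _ = (1-s)/((C.card:ℝ) + 1) * s^k * (q+r)^C.card := by
        rw [pow_succ, hqr]; ring

lemma card_compl_cast (A : Finset (Fin m0)) : (m0:ℝ) = (A.card:ℝ) + (Aᶜ.card:ℝ) := by
  have := Finset.card_add_card_compl A
  rw [Fintype.card_fin] at this
  exact_mod_cast this.symm

lemma main_setIntegral {μ : Measure Ω} [IsProbabilityMeasure μ]
    (hmeas : ∀ i, Measurable (p i))
    (hindep : iIndepFun p μ)
    (hunif : ∀ i, Measure.map (p i) μ = volume.restrict (Set.Icc 0 1))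
    (hs : 0 ≤ s) (hst : s ≤ t) (ht : t ≤ 1)
    (S : Set ℕ) [DecidablePred (· ∈ S)]
    (hfi : Integrable (fun ω => (1 - t) / ((m0 : ℝ) - (countLE p t ω : ℝ) + 1)) μ)
    (hgi : Integrable (fun ω => (1 - s) / ((m0 : ℝ) - (countLE p s ω : ℝ) + 1)) μ) :
    ∫ ω in (countLE p s) ⁻¹' S, (1 - t) / ((m0 : ℝ) - (countLE p t ω : ℝ) + 1) ∂μ
      ≤ ∫ ω in (countLE p s) ⁻¹' S, (1 - s) / ((m0 : ℝ) - (countLE p s ω : ℝ) + 1) ∂μ := by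
  rw [setIntegral_decomp hmeas hst S hfi (fun a b => (1-t)/((m0:ℝ) - ((a:ℝ)+(b:ℝ)) + 1))
    (fun A B hB ω hω => by rw [countLE_t_of_mem hst hB hω]; push_cast; ring_nf)]
  rw [setIntegral_decomp hmeas hst S hgi (fun a b => (1-s)/((m0:ℝ) - (a:ℝ) + 1))
    (fun A B hB ω hω => by rw [countLE_s_of_mem hst hB hω])]
  apply Finset.sum_le_sum
  intro A hA
  have hWt : ∀ B ∈ Aᶜ.powerset, (μ (Ev p s t A B)).toReal = Wt s t A B := fun B hB => by
    rw [meas_Ev hmeas hindep hunif hs hst ht A B,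
      ENNReal.toReal_ofReal (Wt_nonneg hs hst ht A B)]
  have hcast := card_compl_cast A
  calc ∑ B ∈ Aᶜ.powerset,
        (1-t)/((m0:ℝ) - ((A.card:ℝ)+(B.card:ℝ)) + 1) * (μ (Ev p s t A B)).toReal
      = ∑ B ∈ Aᶜ.powerset,
        (1-t)/((Aᶜ.card:ℝ) - B.card + 1) * (s^A.card * ((t-s)^B.card * (1-t)^(Aᶜ.card - B.card))) := by
        refine Finset.sum_congr rfl fun B hB => ?_
        rw [hWt B hB, Wt_formula (Finset.mem_powerset.mp hB)]
        rw [hcast]; ring_nf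
    _ ≤ ∑ B ∈ Aᶜ.powerset,
        (1-s)/((Aᶜ.card:ℝ) + 1) * (s^A.card * ((t-s)^B.card * (1-t)^(Aᶜ.card - B.card))) :=
        inner_ineq hs hst ht A.card Aᶜ
    _ = ∑ B ∈ Aᶜ.powerset, (1-s)/((m0:ℝ) - (A.card:ℝ) + 1) * (μ (Ev p s t A B)).toReal := by
        refine Finset.sum_congr rfl fun B hB => ?_
        rw [hWt B hB, Wt_formula (Finset.mem_powerset.mp hB)]
        rw [hcast]; ring_nf

end mainineq

section final
variable {Ω : Type*} [mΩ : MeasurableSpace Ω] {m0 : ℕ} {p : Fin m0 → Ω → ℝ} {s t : ℝ}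

lemma countLE_le (p : Fin m0 → Ω → ℝ) (u : ℝ) (ω : Ω) : countLE p u ω ≤ m0 := by
  have := Finset.card_filter_le Finset.univ (fun i => p i ω ≤ u)
  simpa [countLE] using this

lemma denom_ge_one (p : Fin m0 → Ω → ℝ) (u : ℝ) (ω : Ω) :
    (1:ℝ) ≤ (m0 : ℝ) - (countLE p u ω : ℝ) + 1 := by
  have h := countLE_le p u ω
  have : (countLE p u ω : ℝ) ≤ (m0 : ℝ) := by exact_mod_cast h
  linarith

lemma integrable_ratio {μ : Measure Ω} [IsProbabilityMeasure μ]
    (hmeas : ∀ i, Measurable (p i)) (u : ℝ) {c : ℝ} (hc0 : 0 ≤ c) (hc1 : c ≤ 1) :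
    Integrable (fun ω => c / ((m0 : ℝ) - (countLE p u ω : ℝ) + 1)) μ := by
  have hmf : Measurable (fun ω => c / ((m0 : ℝ) - (countLE p u ω : ℝ) + 1)) := by
    exact (measurable_from_top (f := fun n : ℕ => c / ((m0:ℝ) - (n:ℝ) + 1))).comp
      (measurable_countLE hmeas u)
  refine Integrable.mono' (integrable_const 1) hmf.aestronglyMeasurable ?_
  filter_upwards with ω
  have hd := denom_ge_one p u ω
  have hnn : 0 ≤ c / ((m0 : ℝ) - (countLE p u ω : ℝ) + 1) := by positivity
  rw [Real.norm_eq_abs, abs_of_nonneg hnn]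
  rw [div_le_one (by linarith)]
  linarith

theorem cond_exp_one_step_supermartingale' {μ : Measure Ω} [IsProbabilityMeasure μ]
    (hmeas : ∀ i, Measurable (p i))
    (hindep : iIndepFun p μ)
    (hunif : ∀ i, Measure.map (p i) μ = volume.restrict (Set.Icc 0 1))
    (hs : 0 ≤ s) (hst : s ≤ t) (ht : t ≤ 1) :
    ∀ᵐ ω ∂μ,
      (μ[(fun ω' => (1 - t) / ((m0 : ℝ) - (countLE p t ω' : ℝ) + 1)) |
          MeasurableSpace.comap (countLE p s) ⊤]) ω ≤
        (1 - s) / ((m0 : ℝ) - (countLE p s ω : ℝ) + 1) := by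
  classical
  set f : Ω → ℝ := fun ω => (1 - t) / ((m0 : ℝ) - (countLE p t ω : ℝ) + 1) with hf_def
  set g : Ω → ℝ := fun ω => (1 - s) / ((m0 : ℝ) - (countLE p s ω : ℝ) + 1) with hg_def
  have hVs : Measurable (countLE p s) := measurable_countLE hmeas s
  have hm : MeasurableSpace.comap (countLE p s) ⊤ ≤ mΩ := hVs.comap_le
  have hfi : Integrable f μ := integrable_ratio hmeas t (by linarith) (by linarith [hs.trans hst])
  have hgi : Integrable g μ := integrable_ratio hmeas s (by linarith [hst.trans ht]) (by linarith)
  have hgm : Measurable[MeasurableSpace.comap (countLE p s) ⊤] g :=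
    (measurable_from_top (f := fun n : ℕ => (1-s)/((m0:ℝ) - (n:ℝ) + 1))).comp
      (measurable_iff_comap_le.mpr le_rfl)
  have hX_sm : StronglyMeasurable[MeasurableSpace.comap (countLE p s) ⊤] (μ[f|MeasurableSpace.comap (countLE p s) ⊤]) := stronglyMeasurable_condExp
  have key : μ[f|MeasurableSpace.comap (countLE p s) ⊤] ≤ᵐ[μ.trim hm] g := by
    apply ae_le_of_forall_setIntegral_le
    · exact integrable_condExp.trim hm hX_sm
    · exact hgi.trim hm hgm.stronglyMeasurable
    · intro U hU _
      have e1 : ∫ x in U, (μ[f|MeasurableSpace.comap (countLE p s) ⊤]) x ∂(μ.trim hm) = ∫ x in U, (μ[f|MeasurableSpace.comap (countLE p s) ⊤]) x ∂μ := by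
        rw [restrict_trim hm μ hU, ← integral_trim hm hX_sm]
      have e2 : ∫ x in U, g x ∂(μ.trim hm) = ∫ x in U, g x ∂μ := by
        rw [restrict_trim hm μ hU, ← integral_trim hm hgm.stronglyMeasurable]
      rw [e1, e2, setIntegral_condExp hm hfi hU]
      obtain ⟨S, -, rfl⟩ := hU
      exact main_setIntegral hmeas hindep hunif hs hst ht S hfi hgi
  exact ae_le_of_ae_le_trim key

end final


/-- One-step supermartingale inequality: for i.i.d. `Uniform(0,1)` variables and
`V(t) = #{i : pᵢ ≤ t}`, for fixed `0 ≤ s ≤ t ≤ 1`,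
`E[(1-t)/(m₀ - V(t) + 1) | V(s)] ≤ (1-s)/(m₀ - V(s) + 1)` almost surely. -/
theorem cond_exp_one_step_supermartingale {Ω : Type*} [mΩ : MeasurableSpace Ω]
    (μ : Measure Ω) [IsProbabilityMeasure μ]
    (m0 : ℕ) (p : Fin m0 → Ω → ℝ)
    (hmeas : ∀ i, Measurable (p i))
    (hindep : iIndepFun p μ)
    (hunif : ∀ i, Measure.map (p i) μ = volume.restrict (Set.Icc 0 1))
    (s t : ℝ) (hs : 0 ≤ s) (hst : s ≤ t) (ht : t ≤ 1) :
    ∀ᵐ ω ∂μ,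
      (μ[(fun ω' => (1 - t) / ((m0 : ℝ) - (countLE p t ω' : ℝ) + 1)) |
          MeasurableSpace.comap (countLE p s) ⊤]) ω ≤
        (1 - s) / ((m0 : ℝ) - (countLE p s ω : ℝ) + 1) :=
  cond_exp_one_step_supermartingale' hmeas hindep hunif hs hst ht
end

section
/- Let $p_1, \dots, p_{m_0}$ be i.i.d. Uniform$(0,1)$, $V(t) = \#\{i : p_i \le t\}$. For any fixed $\kappa \in (0,1)$, $E\Big[\frac{1-\kappa}{m_0 - V(\kappa) + 1} \cdot \frac{V(\kappa)}{\kappa}\Big] \le 1 - \kappa^{m_0} \le 1$. -/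
open MeasureTheory ProbabilityTheory

/-- The binomial algebra: `∑ v, C(m,v) κ^v (1-κ)^(m-v) ⬝ g v = 1 - κ^m`. -/
lemma storey_algebra (m0 : ℕ) (κ : ℝ) (hκ0 : 0 < κ) (hκ1 : κ < 1) :
    ∑ v ∈ Finset.range (m0 + 1), (m0.choose v : ℝ) * (κ ^ v * (1 - κ) ^ (m0 - v)) *
      ((1 - κ) / ((m0 : ℝ) - v + 1) * (v / κ)) = 1 - κ ^ m0 := by
  rw [Finset.sum_range_succ']
  simp only [Nat.cast_zero, zero_div, mul_zero, add_zero]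
  have key : ∀ w ∈ Finset.range m0,
      (m0.choose (w + 1) : ℝ) * (κ ^ (w + 1) * (1 - κ) ^ (m0 - (w + 1))) *
        ((1 - κ) / ((m0 : ℝ) - (w + 1 : ℕ) + 1) * ((w + 1 : ℕ) / κ)) =
      (m0.choose w : ℝ) * (κ ^ w * (1 - κ) ^ (m0 - w)) := by
    intro w hw
    rw [Finset.mem_range] at hw
    have hd : (m0 : ℝ) - (w + 1 : ℕ) + 1 = ((m0 - w : ℕ) : ℝ) := by
      push_cast [Nat.cast_sub hw.le]; ring
    have hdn : ((m0 - w : ℕ) : ℝ) ≠ 0 := by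
      have : 0 < m0 - w := Nat.sub_pos_of_lt hw
      positivity
    have hch : (m0.choose (w + 1) : ℝ) * (w + 1 : ℕ) = (m0.choose w : ℝ) * ((m0 - w : ℕ) : ℝ) := by
      rw [← Nat.cast_mul, ← Nat.cast_mul, Nat.choose_succ_right_eq]
    have hpow : (1 - κ) ^ (m0 - w) = (1 - κ) ^ (m0 - (w + 1)) * (1 - κ) := by
      rw [← pow_succ]
      congr 1
      omega
    rw [hd]
    field_simp
    rw [hpow]
    push_cast at hch ⊢
    linear_combination (κ ^ (w + 1) * (1 - κ) ^ (m0 - (w + 1)) * (1 - κ)) * hch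
  rw [Finset.sum_congr rfl key]
  have hbin : (κ + (1 - κ)) ^ m0 =
      ∑ v ∈ Finset.range (m0 + 1), κ ^ v * (1 - κ) ^ (m0 - v) * (m0.choose v : ℝ) :=
    add_pow κ (1 - κ) m0
  rw [Finset.sum_range_succ] at hbin
  have h1 : (κ + (1 - κ)) ^ m0 = 1 := by norm_num
  have : ∑ v ∈ Finset.range m0, κ ^ v * (1 - κ) ^ (m0 - v) * (m0.choose v : ℝ) = 1 - κ ^ m0 := by
    rw [h1] at hbin
    simp at hbin
    linarith
  rw [← this]
  apply Finset.sum_congr rfl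
  intro v _
  ring

/-- For i.i.d. `Uniform(0,1)` variables, `V(t) = #{i : pᵢ ≤ t}` and fixed `κ ∈ (0,1)`,
`E[(1-κ)/(m₀ - V(κ) + 1) ⬝ V(κ)/κ] ≤ 1 - κ^m₀ ≤ 1`. -/
theorem storey_binomial_bound {Ω : Type*} [MeasurableSpace Ω]
    (μ : Measure Ω) [IsProbabilityMeasure μ]
    (m0 : ℕ) (p : Fin m0 → Ω → ℝ)
    (hmeas : ∀ i, Measurable (p i))
    (hindep : iIndepFun p μ)
    (hunif : ∀ i, Measure.map (p i) μ = volume.restrict (Set.Icc 0 1))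
    (κ : ℝ) (hκ0 : 0 < κ) (hκ1 : κ < 1) :
    (∫ ω, ((1 - κ) / ((m0 : ℝ) - (countLE p κ ω : ℝ) + 1)) *
        ((countLE p κ ω : ℝ) / κ) ∂μ) ≤ 1 - κ ^ m0 ∧ (1 : ℝ) - κ ^ m0 ≤ 1 := by
  have hκ0' : (0:ℝ) ≤ κ := hκ0.le
  have hκ1' : (0:ℝ) ≤ 1 - κ := by linarith
  set g : ℕ → ℝ := fun v => (1 - κ) / ((m0 : ℝ) - v + 1) * (v / κ) with hg
  -- the cell of the partition indexed by S
  set B : Finset (Fin m0) → Fin m0 → Set ℝ :=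
    fun S i => if i ∈ S then Set.Iic κ else Set.Ioi κ with hB
  set A : Finset (Fin m0) → Set Ω := fun S => ⋂ i, p i ⁻¹' B S i with hA
  have hBmeas : ∀ S i, MeasurableSet (B S i) := by
    intro S i
    by_cases h : i ∈ S <;> simp [hB, h, measurableSet_Iic, measurableSet_Ioi]
  have hAmeas : ∀ S, MeasurableSet (A S) := fun S =>
    MeasurableSet.iInter fun i => (hmeas i) (hBmeas S i)
  -- membership characterization
  have hmem : ∀ ω S, ω ∈ A S ↔ S = Finset.univ.filter (fun i => p i ω ≤ κ) := by
    intro ω S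
    simp only [hA, Set.mem_iInter, Set.mem_preimage, hB]
    constructor
    · intro h
      ext i
      simp only [Finset.mem_filter, Finset.mem_univ, true_and]
      have := h i
      by_cases hi : i ∈ S
      · simp [hi] at this; simp [hi, this]
      · simp [hi] at this; simp [hi]; linarith
    · intro h
      intro i
      by_cases hi : i ∈ S
      · have : p i ω ≤ κ := by
          rw [h] at hi; simpa using hi
        simp [hi, this]
      · have : ¬ p i ω ≤ κ := by
          rw [h] at hi; simpa using hi
        simp [hi]; linarith [lt_of_not_ge this]
  -- measure of each coordinate event
  have hIic : ∀ i, μ (p i ⁻¹' Set.Iic κ) = ENNReal.ofReal κ := by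
    intro i
    rw [← Measure.map_apply (hmeas i) measurableSet_Iic, hunif i,
      Measure.restrict_apply measurableSet_Iic]
    have : Set.Iic κ ∩ Set.Icc 0 1 = Set.Icc 0 κ := by
      ext x
      simp only [Set.mem_inter_iff, Set.mem_Iic, Set.mem_Icc]
      constructor
      · rintro ⟨h1, h2, h3⟩; exact ⟨h2, h1⟩
      · rintro ⟨h1, h2⟩; exact ⟨h2, h1, by linarith⟩
    rw [this, Real.volume_Icc]
    norm_num
  have hIoi : ∀ i, μ (p i ⁻¹' Set.Ioi κ) = ENNReal.ofReal (1 - κ) := by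
    intro i
    rw [← Measure.map_apply (hmeas i) measurableSet_Ioi, hunif i,
      Measure.restrict_apply measurableSet_Ioi]
    have : Set.Ioi κ ∩ Set.Icc 0 1 = Set.Ioc κ 1 := by
      ext x
      simp only [Set.mem_inter_iff, Set.mem_Ioi, Set.mem_Icc, Set.mem_Ioc]
      constructor
      · rintro ⟨h1, h2, h3⟩; exact ⟨h1, h3⟩
      · rintro ⟨h1, h2⟩; exact ⟨h1, by linarith, h2⟩
    rw [this, Real.volume_Ioc]
  -- measure of each cell
  have hAμ : ∀ S : Finset (Fin m0),
      μ (A S) = ENNReal.ofReal κ ^ S.card * ENNReal.ofReal (1 - κ) ^ (m0 - S.card) := by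
    intro S
    have := hindep.meas_iInter (s := fun i => p i ⁻¹' B S i)
      (fun i => ⟨B S i, hBmeas S i, rfl⟩)
    rw [hA]
    simp only
    rw [this]
    have : ∀ i, μ (p i ⁻¹' B S i) =
        if i ∈ S then ENNReal.ofReal κ else ENNReal.ofReal (1 - κ) := by
      intro i
      by_cases hi : i ∈ S <;> simp [hB, hi, hIic i, hIoi i]
    rw [Finset.prod_congr rfl (fun i _ => this i)]
    rw [Finset.prod_ite, Finset.prod_const, Finset.prod_const]
    congr 1
    · congr 1
      simp [Finset.filter_mem_eq_inter]
    · congr 1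
      have : Finset.filter (fun i => i ∉ S) Finset.univ = Sᶜ := by
        ext i; simp
      rw [this, Finset.card_compl, Fintype.card_fin]
  -- the integrand as a finite sum of indicators
  have hfun : ∀ ω, ((1 - κ) / ((m0 : ℝ) - (countLE p κ ω : ℝ) + 1)) *
      ((countLE p κ ω : ℝ) / κ) =
      ∑ S : Finset (Fin m0), Set.indicator (A S) (fun _ => g S.card) ω := by
    intro ω
    rw [Finset.sum_eq_single (Finset.univ.filter (fun i => p i ω ≤ κ))]
    · rw [Set.indicator_of_mem ((hmem ω _).2 rfl)]
      rfl
    · intro S _ hS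
      exact Set.indicator_of_notMem (fun h => hS ((hmem ω S).1 h)) _
    · intro h; exact absurd (Finset.mem_univ _) h
  have hint : (∫ ω, ((1 - κ) / ((m0 : ℝ) - (countLE p κ ω : ℝ) + 1)) *
      ((countLE p κ ω : ℝ) / κ) ∂μ) = 1 - κ ^ m0 := by
    calc (∫ ω, ((1 - κ) / ((m0 : ℝ) - (countLE p κ ω : ℝ) + 1)) *
          ((countLE p κ ω : ℝ) / κ) ∂μ)
        = ∫ ω, ∑ S : Finset (Fin m0), Set.indicator (A S) (fun _ => g S.card) ω ∂μ := by
          exact integral_congr_ae (Filter.Eventually.of_forall hfun)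
      _ = ∑ S : Finset (Fin m0), ∫ ω, Set.indicator (A S) (fun _ => g S.card) ω ∂μ := by
          exact integral_finset_sum _
            (fun S _ => (integrable_const (g S.card)).indicator (hAmeas S))
      _ = ∑ S : Finset (Fin m0), (κ ^ S.card * (1 - κ) ^ (m0 - S.card)) * g S.card := by
          apply Finset.sum_congr rfl
          intro S _
          rw [integral_indicator_const _ (hAmeas S), measureReal_def, hAμ S, smul_eq_mul]
          congr 1
          rw [ENNReal.toReal_mul, ENNReal.toReal_pow, ENNReal.toReal_pow,
            ENNReal.toReal_ofReal hκ0', ENNReal.toReal_ofReal hκ1']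
      _ = ∑ v ∈ Finset.range (m0 + 1), (m0.choose v : ℝ) *
            (κ ^ v * (1 - κ) ^ (m0 - v)) * g v := by
          rw [← Finset.powerset_univ, Finset.sum_powerset,
            Finset.card_univ, Fintype.card_fin]
          apply Finset.sum_congr rfl
          intro v _
          rw [Finset.sum_congr rfl (fun S hS => by
            rw [(Finset.mem_powersetCard.1 hS).2]),
            Finset.sum_const, Finset.card_powersetCard, Finset.card_univ,
            Fintype.card_fin, nsmul_eq_mul]
          ring
      _ = 1 - κ ^ m0 := storey_algebra m0 κ hκ0 hκ1
  refine ⟨le_of_eq hint, ?_⟩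
  have : (0:ℝ) ≤ κ ^ m0 := pow_nonneg hκ0' _
  linarith
end
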